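/- Let Ω := {x : E | f x > 0}, assume f is continuously differentiable on Ω with ∇f x ≠ 0 for all x ∈ Ω, and let x₀ ∈ Ω. Let ψ : ℝ → ℝ be nonnegative and Lebesgue integrable on (0, f x₀), and suppose there is a measurable set D ⊆ (0, f x₀) with (0, f x₀) \ D of Lebesgue measure zero such that ψ (f x) * ‖∇f x‖ ≥ 1 for every x ∈ Ω with f x ∈ D. Let T ∈ (0, ∞], let α : ℝ → E satisfy α 0 = x₀, α t ∈ Ω for all t ∈ [0, T), and HasDerivAt α (−∇f (α t)) t for every t ∈ [0, T). Then for every s ∈ (0, T), the length of α on [0, s] satisfies ∫ r in (0, s), ‖∇f (α r)‖ ≤ ∫ r in (0, f x₀), ψ r. -/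

import Mathlib

open Set MeasureTheory
open scoped ENNReal

theorem length_bound_along_gradient_flow (n : ℕ) (hn : 1 ≤ n)
    (f : EuclideanSpace ℝ (Fin n) → ℝ)
    (hf : Continuous f) (hf0 : ∀ x, 0 ≤ f x)
    (hC1 : ContDiffOn ℝ 1 f {x | 0 < f x})
    (hgrad_ne : ∀ x, 0 < f x → gradient f x ≠ 0)
    (x₀ : EuclideanSpace ℝ (Fin n)) (hx₀ : 0 < f x₀)
    (ψ : ℝ → ℝ) (hψ0 : ∀ t, 0 ≤ ψ t) (hψint : IntegrableOn ψ (Ioo 0 (f x₀)))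
    (D : Set ℝ) (hD : MeasurableSet D) (hDsub : D ⊆ Ioo 0 (f x₀))
    (hDfull : volume (Ioo 0 (f x₀) \ D) = 0)
    (hKL : ∀ x, 0 < f x → f x ∈ D → 1 ≤ ψ (f x) * ‖gradient f x‖)
    (T : ℝ≥0∞) (hT : 0 < T)
    (α : ℝ → EuclideanSpace ℝ (Fin n)) (hα0 : α 0 = x₀)
    (hαΩ : ∀ t : ℝ, 0 ≤ t → ENNReal.ofReal t < T → 0 < f (α t))
    (hαflow : ∀ t : ℝ, 0 ≤ t → ENNReal.ofReal t < T →
      HasDerivAt α (-(gradient f (α t))) t) :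
    ∀ s : ℝ, 0 < s → ENNReal.ofReal s < T →
      ∫ r in Ioo (0:ℝ) s, ‖gradient f (α r)‖ ≤ ∫ r in Ioo (0:ℝ) (f x₀), ψ r := by
  intro s hs hsT
  set Ω : Set (EuclideanSpace ℝ (Fin n)) := {x | 0 < f x} with hΩdef
  have hΩ : IsOpen Ω := isOpen_lt continuous_const hf
  -- every t in [0, s] satisfies hypotheses
  have hmem : ∀ t : ℝ, t ∈ Icc 0 s → 0 ≤ t ∧ ENNReal.ofReal t < T := by
    intro t ht
    exact ⟨ht.1, lt_of_le_of_lt (ENNReal.ofReal_le_ofReal ht.2) hsT⟩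
  set g : ℝ → EuclideanSpace ℝ (Fin n) := fun r => gradient f (α r) with hg
  set φ : ℝ → ℝ := fun r => f (α r) with hφ
  have hαpos : ∀ t ∈ Icc (0:ℝ) s, 0 < φ t := fun t ht => hαΩ t (hmem t ht).1 (hmem t ht).2
  -- derivative of φ
  have hφderiv : ∀ t ∈ Icc (0:ℝ) s, HasDerivAt φ (-‖g t‖^2) t := by
    intro t ht
    have hmemΩ : α t ∈ Ω := hαpos t ht
    have hdiff : DifferentiableAt ℝ f (α t) :=
      ((hC1.differentiableOn one_ne_zero) (α t) hmemΩ).differentiableAt (hΩ.mem_nhds hmemΩ)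
    have hgr : HasFDerivAt f ((InnerProductSpace.toDual ℝ (EuclideanSpace ℝ (Fin n))) (g t)) (α t) :=
      hdiff.hasGradientAt.hasFDerivAt
    have h := hgr.comp_hasDerivAt t (hαflow t (hmem t ht).1 (hmem t ht).2)
    have hval : (InnerProductSpace.toDual ℝ (EuclideanSpace ℝ (Fin n)) (g t)) (-(gradient f (α t)))
        = -‖g t‖^2 := by
      rw [InnerProductSpace.toDual_apply_apply, inner_neg_right, real_inner_self_eq_norm_sq]
    exact hval ▸ h
  -- continuity facts
  have hαcont : ContinuousOn α (Icc 0 s) := fun t ht =>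
    ((hαflow t (hmem t ht).1 (hmem t ht).2).continuousAt).continuousWithinAt
  have hφcont : ContinuousOn φ (Icc 0 s) := hf.comp_continuousOn hαcont
  have hgradcont : ContinuousOn (fun x => gradient f x) Ω := by
    have h1 : ContinuousOn (fderiv ℝ f) Ω := hC1.continuousOn_fderiv_of_isOpen hΩ le_rfl
    have : ContinuousOn (fun x => (InnerProductSpace.toDual ℝ (EuclideanSpace ℝ (Fin n))).symm (fderiv ℝ f x)) Ω :=
      (InnerProductSpace.toDual ℝ (EuclideanSpace ℝ (Fin n))).symm.continuous.comp_continuousOn h1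
    exact this
  have hgcont : ContinuousOn g (Icc 0 s) :=
    hgradcont.comp hαcont (fun t ht => hαpos t ht)
  have hgnormsq : ContinuousOn (fun r => ‖g r‖^2) (Icc 0 s) := (hgcont.norm.pow 2)
  -- strict antitonicity
  have hanti : StrictAntiOn φ (Icc 0 s) := by
    apply strictAntiOn_of_deriv_neg (convex_Icc 0 s) hφcont
    intro t ht
    rw [interior_Icc] at ht
    have ht' : t ∈ Icc (0:ℝ) s := Ioo_subset_Icc_self ht
    rw [(hφderiv t ht').deriv]
    have : g t ≠ 0 := hgrad_ne (α t) (hαpos t ht')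
    have : 0 < ‖g t‖ := norm_pos_iff.mpr this
    nlinarith
  have hinj : InjOn φ (Ioo 0 s) := (hanti.injOn).mono Ioo_subset_Icc_self
  -- image is inside Ioo 0 (f x₀)
  have himg : φ '' Ioo 0 s ⊆ Ioo 0 (f x₀) := by
    rintro y ⟨r, hr, rfl⟩
    have hr' : r ∈ Icc (0:ℝ) s := Ioo_subset_Icc_self hr
    refine ⟨hαpos r hr', ?_⟩
    have := hanti (left_mem_Icc.mpr hs.le) hr' hr.1
    simpa [φ, hα0] using this
  -- change of variables
  have hderivwithin : ∀ r ∈ Ioo (0:ℝ) s, HasDerivWithinAt φ (-‖g r‖^2) (Ioo 0 s) r :=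
    fun r hr => (hφderiv r (Ioo_subset_Icc_self hr)).hasDerivWithinAt
  have hcov : ∫ x in φ '' Ioo 0 s, ψ x
      = ∫ r in Ioo (0:ℝ) s, |(-‖g r‖^2)| • ψ (φ r) :=
    integral_image_eq_integral_abs_deriv_smul measurableSet_Ioo hderivwithin hinj ψ
  have hintimg : IntegrableOn ψ (φ '' Ioo 0 s) := hψint.mono_set himg
  have hintRHS : IntegrableOn (fun r => |(-‖g r‖^2)| • ψ (φ r)) (Ioo 0 s) := by
    rw [← integrableOn_image_iff_integrableOn_abs_deriv_smul measurableSet_Ioo hderivwithin hinj]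
    exact hintimg
  -- bad set has measure zero
  set c : ℝ → ℝ := fun r => max 0 (min r s) with hc
  have hcmem : ∀ r, c r ∈ Icc (0:ℝ) s := fun r =>
    ⟨le_max_left _ _, max_le (le_of_lt hs) (min_le_right _ _)⟩
  have hceq : ∀ r ∈ Icc (0:ℝ) s, c r = r := by
    intro r hr
    simp [hc, min_eq_left hr.2, max_eq_right hr.1]
  have hφtilde : Continuous (fun r => φ (c r)) := by
    apply hφcont.comp_continuous
    · exact (continuous_const.max (continuous_id.min continuous_const))
    · exact hcmem
  set B : Set ℝ := Ioo 0 s ∩ (fun r => φ (c r)) ⁻¹' (Ioo 0 (f x₀) \ D) with hB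
  have hBmeas : MeasurableSet B :=
    measurableSet_Ioo.inter ((measurableSet_Ioo.diff hD).preimage hφtilde.measurable)
  have hBsub : B ⊆ Ioo 0 s := inter_subset_left
  have hBIcc : B ⊆ Icc 0 s := hBsub.trans Ioo_subset_Icc_self
  have hBchar : ∀ r ∈ B, φ r ∈ Ioo 0 (f x₀) \ D := by
    intro r hr
    have := hr.2
    rwa [mem_preimage, hceq r (hBIcc hr)] at this
  have hBnull : volume B = 0 := by
    -- via change of variables with constant 1
    have hderivB : ∀ r ∈ B, HasDerivWithinAt φ (-‖g r‖^2) B r :=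
      fun r hr => (hφderiv r (hBIcc hr)).hasDerivWithinAt
    have hinjB : InjOn φ B := hinj.mono hBsub
    have hcovB : ∫ x in φ '' B, (1:ℝ) = ∫ r in B, |(-‖g r‖^2)| • (1:ℝ) :=
      integral_image_eq_integral_abs_deriv_smul hBmeas hderivB hinjB _
    have himgBnull : volume (φ '' B) = 0 := by
      apply measure_mono_null _ hDfull
      rintro y ⟨r, hr, rfl⟩
      exact hBchar r hr
    have hLHS : ∫ x in φ '' B, (1:ℝ) = 0 := by
      rw [Measure.restrict_eq_zero.mpr himgBnull]
      simp
    -- lower bound via compactness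
    obtain ⟨r₀, hr₀, hminall⟩ :=
      (isCompact_Icc).exists_isMinOn (nonempty_Icc.mpr hs.le) hgnormsq
    set m := ‖g r₀‖^2 with hm
    have hmpos : 0 < m := by
      have : g r₀ ≠ 0 := hgrad_ne (α r₀) (hαpos r₀ hr₀)
      have : 0 < ‖g r₀‖ := norm_pos_iff.mpr this
      positivity
    have hBfin : volume B ≠ ⊤ :=
      ne_top_of_le_ne_top (by simp) (measure_mono hBsub)
    have hintB : IntegrableOn (fun r => |(-‖g r‖^2)|) B := by
      apply IntegrableOn.mono_set _ hBIcc
      exact (hgnormsq.neg.abs).integrableOn_Icc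
    have hlow : m * (volume B).toReal ≤ ∫ r in B, |(-‖g r‖^2)| := by
      apply setIntegral_ge_of_const_le_real hBmeas hBfin _ hintB
      intro r hr
      rw [abs_neg, abs_of_nonneg (by positivity)]
      exact hminall (hBIcc hr)
    have hz : ∫ r in B, |(-‖g r‖^2)| = 0 := by
      have : ∫ r in B, |(-‖g r‖^2)| • (1:ℝ) = ∫ r in B, |(-‖g r‖^2)| := by
        simp
      rw [← this, ← hcovB, hLHS]
    rw [hz] at hlow
    have : (volume B).toReal = 0 := by nlinarith [ENNReal.toReal_nonneg (a := volume B)]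
    exact (ENNReal.toReal_eq_zero_iff _).mp this |>.resolve_right hBfin
  -- a.e. pointwise bound on Ioo 0 s
  have hae : ∀ᵐ r ∂(volume.restrict (Ioo 0 s)), ‖g r‖ ≤ |(-‖g r‖^2)| • ψ (φ r) := by
    have h1 : ∀ᵐ r ∂(volume.restrict (Ioo 0 s)), r ∈ Ioo (0:ℝ) s :=
      ae_restrict_mem measurableSet_Ioo
    have h2 : ∀ᵐ r ∂(volume.restrict (Ioo 0 s)), r ∉ B := by
      exact ae_restrict_of_ae (measure_eq_zero_iff_ae_notMem.mp hBnull)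
    filter_upwards [h1, h2] with r hr hrB
    have hrIcc : r ∈ Icc (0:ℝ) s := Ioo_subset_Icc_self hr
    have hφmem : φ r ∈ Ioo 0 (f x₀) := himg ⟨r, hr, rfl⟩
    have hφD : φ r ∈ D := by
      by_contra hnD
      exact hrB ⟨hr, by rw [mem_preimage, hceq r hrIcc]; exact ⟨hφmem, hnD⟩⟩
    have hkl : 1 ≤ ψ (φ r) * ‖g r‖ := hKL (α r) (hαpos r hrIcc) hφD
    have hgn : 0 ≤ ‖g r‖ := norm_nonneg _
    rw [smul_eq_mul, abs_neg, abs_of_nonneg (by positivity)]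
    nlinarith [mul_le_mul_of_nonneg_left hkl hgn]
  -- integrability of LHS
  have hintLHS : IntegrableOn (fun r => ‖g r‖) (Ioo 0 s) :=
    (hgcont.norm.integrableOn_Icc).mono_set Ioo_subset_Icc_self
  calc ∫ r in Ioo (0:ℝ) s, ‖g r‖
      ≤ ∫ r in Ioo (0:ℝ) s, |(-‖g r‖^2)| • ψ (φ r) :=
        setIntegral_mono_ae_restrict hintLHS hintRHS hae
    _ = ∫ x in φ '' Ioo 0 s, ψ x := hcov.symm
    _ ≤ ∫ r in Ioo (0:ℝ) (f x₀), ψ r := by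
        apply setIntegral_mono_set hψint
        · exact Filter.Eventually.of_forall fun x => hψ0 x
        · exact HasSubset.Subset.eventuallyLE himg
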